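/- Let ν, c > 0 and define λ(s) = s/√(νs+c²) and r(s) = λ²/(λ+2)² for s ∈ ℂ \ (-∞, -c²/ν]. Then there exist σ₀ > 0 and r₀ ∈ (0,1) such that for all s with Re s ≥ -σ₀ (and s ∉ (-∞, -c²/ν]), one has Re λ(s) ≥ -r₀ and |r(s) e^{-2λ(s)}| ≤ r₀. -/

import Mathlib

lemma auxB (T2 x : ℝ) (hT2 : 0 ≤ T2) (hx0 : 0 ≤ x) (hT2x : T2 ≤ 25*x^2) :
    T2 * Real.exp (-(2*x)) / (T2 + 4*x + 4) ≤ 25/29 := by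
  have hD : (0:ℝ) < T2 + 4*x + 4 := by linarith
  have hepos := Real.exp_pos (-(2*x))
  rcases le_or_gt T2 25 with h | h
  · have he : Real.exp (-(2*x)) ≤ 1 := by
      have h1 : Real.exp (-(2*x)) ≤ Real.exp 0 := Real.exp_le_exp.mpr (by linarith)
      rwa [Real.exp_zero] at h1
    have step : T2 * Real.exp (-(2*x)) / (T2 + 4*x + 4) ≤ T2 / (T2 + 4) :=
      div_le_div₀ hT2 (by nlinarith) (by linarith) (by linarith)
    have step2 : T2 / (T2 + 4) ≤ 25/29 := by
      rw [div_le_div_iff₀ (by linarith) (by norm_num)]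
      linarith
    linarith
  · have hx1 : 1 ≤ x := by nlinarith
    have he : Real.exp (-(2*x)) ≤ Real.exp (-2) := Real.exp_le_exp.mpr (by linarith)
    have hee : Real.exp (-2) ≤ 1/4 := by
      rw [Real.exp_neg]
      have h2 : (2:ℝ) ≤ Real.exp 1 := by linarith [Real.add_one_le_exp 1]
      have h4 : (4:ℝ) ≤ Real.exp 2 := by
        have he2 : Real.exp 2 = Real.exp 1 * Real.exp 1 := by
          rw [← Real.exp_add]; norm_num
        nlinarith
      rw [inv_eq_one_div]
      exact one_div_le_one_div_of_le (by norm_num) h4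
    have hfrac : T2 / (T2 + 4*x + 4) ≤ 1 := by rw [div_le_one hD]; linarith
    calc T2 * Real.exp (-(2*x)) / (T2 + 4*x + 4)
        = T2 / (T2 + 4*x + 4) * Real.exp (-(2*x)) := by ring
      _ ≤ 1 * (1/4) := mul_le_mul hfrac (le_trans he hee) hepos.le (by norm_num)
      _ ≤ 25/29 := by norm_num

lemma auxA (M2 T2 x δ : ℝ) (hM2 : 0 < M2) (hT2 : 0 ≤ T2) (hT2M : T2 ≤ M2)
    (hδ : 0 < δ) (hδ1 : δ * (6 + M2) ≤ 1) (hx : -δ ≤ x) :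
    T2 * Real.exp (-(2*x)) / (T2 + 4*x + 4) ≤ M2/(M2+2) := by
  have hδ6 : δ ≤ 1/6 := by nlinarith
  have hD0 : (0:ℝ) < T2 + 4*x + 4 := by linarith
  have hDl : (0:ℝ) < T2 - 4*δ + 4 := by linarith
  have h12δ : (0:ℝ) < 1 - 2*δ := by linarith
  have he : Real.exp (-(2*x)) ≤ Real.exp (2*δ) := Real.exp_le_exp.mpr (by linarith)
  have hE : Real.exp (2*δ) ≤ 1/(1-2*δ) := by
    rw [le_div_iff₀ h12δ]
    have h1 : 1 - 2*δ ≤ Real.exp (-(2*δ)) := by linarith [Real.add_one_le_exp (-(2*δ))]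
    have h2 : Real.exp (2*δ) * Real.exp (-(2*δ)) = 1 := by
      rw [← Real.exp_add]; norm_num
    nlinarith [Real.exp_pos (2*δ)]
  have step1 : T2 * Real.exp (-(2*x)) / (T2 + 4*x + 4)
      ≤ T2 * Real.exp (2*δ) / (T2 - 4*δ + 4) :=
    div_le_div₀ (by positivity) (mul_le_mul_of_nonneg_left he hT2) hDl (by linarith)
  have key : T2 * (M2+2) ≤ M2 * ((1-2*δ) * (T2 - 4*δ + 4)) := by
    nlinarith [mul_nonneg (mul_nonneg hδ.le hM2.le) (sub_nonneg.mpr hT2M),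
      mul_le_mul_of_nonneg_left hδ1 hM2.le,
      mul_nonneg (mul_nonneg hδ.le hδ.le) hM2.le]
  have step2 : T2 * Real.exp (2*δ) / (T2 - 4*δ + 4) ≤ M2/(M2+2) := by
    rw [div_le_div_iff₀ hDl (by linarith)]
    calc T2 * Real.exp (2*δ) * (M2+2) ≤ T2 * (1/(1-2*δ)) * (M2+2) :=
          mul_le_mul_of_nonneg_right (mul_le_mul_of_nonneg_left hE hT2) (by linarith)
      _ ≤ M2 * (T2 - 4*δ + 4) := by
          rw [mul_one_div, div_mul_eq_mul_div, div_le_iff₀ h12δ]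
          nlinarith [key]
  linarith

lemma auxT2M (ν c T2 N : ℝ) (hν : 0 < ν) (hc : 0 < c) (hN1 : c^2/2 ≤ N) (hN2 : N ≤ 2*c^2)
    (hkey : ν^2*(T2*N) ≤ (N+c^2)^2) (hT2 : 0 ≤ T2) : T2 ≤ 25*c^2/ν^2 := by
  rw [le_div_iff₀ (by positivity)]
  have h1 : ν^2*(T2*(c^2/2)) ≤ ν^2*(T2*N) :=
    mul_le_mul_of_nonneg_left (mul_le_mul_of_nonneg_left hN1 hT2) (by positivity)
  have h2 : (N+c^2)^2 ≤ (3*c^2)^2 := by nlinarith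
  nlinarith [mul_pos hc hc]

lemma auxCaseB (ν c T2 N R x : ℝ) (hν : 0 < ν) (hc : 0 < c) (hN0 : 0 < N)
    (h : 2*c^2 < N) (hkey : ν^2*(T2*N) ≤ (N+c^2)^2) (hT2 : 0 ≤ T2)
    (hxN : ν*x*N = R*(N-c^2)) (hRpos : 0 < R) (h2R : N ≤ 2*R^2) :
    0 ≤ x ∧ T2 ≤ 25*x^2 := by
  have hc2 : 0 < c^2 := by positivity
  have hstep : R * (N/2) ≤ R * (N - c^2) :=
    mul_le_mul_of_nonneg_left (by linarith) hRpos.le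
  have hx0 : 0 ≤ x := by nlinarith [mul_pos hν hN0, mul_pos hRpos hN0]
  have hRx : R ≤ 2*ν*x := by nlinarith [mul_pos hν hN0, mul_pos hRpos hN0]
  have hR2 : R^2 ≤ 4*ν^2*x^2 := by nlinarith [mul_nonneg hν.le hx0]
  have h2 : (N+c^2)^2 ≤ (3*N/2)^2 := by nlinarith
  have h3 : ν^2*T2 ≤ 9*N/4 := by nlinarith [sq_nonneg ν, mul_pos hN0 hN0]
  refine ⟨hx0, ?_⟩
  have h4 : ν^2*T2 ≤ 18*ν^2*x^2 := by nlinarith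
  nlinarith [sq_nonneg x, mul_pos hν hν]

lemma auxSq (ν a b : ℝ) (ha : 0 ≤ a) (hν : 0 ≤ ν) (h : ν*a ≤ b) : ν^2*a^2 ≤ b^2 := by
  nlinarith [mul_nonneg hν ha]

lemma auxDelta (c σ₀ δ M2 : ℝ) (hc : 0 < c) (hδc : δ*c = 2*σ₀)
    (h1 : σ₀*(2*(6+M2)) ≤ c) (hM2 : 0 < M2) (hσ : 0 < σ₀) : δ*(6+M2) ≤ 1 := by
  nlinarith

lemma auxDelta6 (δ M2 : ℝ) (hδ : 0 < δ) (hM2 : 0 < M2) (h : δ*(6+M2) ≤ 1) : δ ≤ 1/6 := by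
  nlinarith

lemma auxXlow (ν c σ₀ δ x N R : ℝ) (hν : 0 < ν) (hc : 0 < c) (hσ : 0 < σ₀)
    (hδc : δ*c = 2*σ₀) (hxN : ν*x*N = R*(N-c^2)) (hN0 : 0 < N) (hRpos : 0 < R)
    (hRN : R^2 ≤ N) (hRc : c/2 ≤ R) (hNl : -(ν*σ₀) ≤ N - c^2) : -δ ≤ x := by
  have h4 : R*c ≤ 2*N := by nlinarith
  have e1 : R*(-(ν*σ₀)) ≤ R*(N-c^2) := mul_le_mul_of_nonneg_left hNl hRpos.le
  have e1c : R*(-(ν*σ₀))*c ≤ R*(N-c^2)*c := mul_le_mul_of_nonneg_right e1 hc.le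
  have e2 : (ν*σ₀)*(R*c) ≤ (ν*σ₀)*(2*N) :=
    mul_le_mul_of_nonneg_left h4 (by positivity)
  have eq1 : (x+δ)*(ν*N*c) = R*(N-c^2)*c + 2*σ₀*(ν*N) := by
    linear_combination c*hxN + (ν*N)*hδc
  have key : 0 ≤ (x+δ)*(ν*N*c) := by nlinarith [e1c, e2]
  have hpos : 0 < ν*N*c := by positivity
  have := (mul_nonneg_iff_of_pos_right hpos).mp key
  linarith

set_option maxHeartbeats 1000000 in
theorem stmt7 (ν c : ℝ) (hν : 0 < ν) (hc : 0 < c) :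
    ∃ σ₀ r₀ : ℝ, 0 < σ₀ ∧ r₀ ∈ Set.Ioo (0:ℝ) 1 ∧
      ∀ s : ℂ, s.re ≥ -σ₀ → ¬(s.im = 0 ∧ s.re ≤ -c^2/ν) →
        (s / ((ν * s + (c:ℂ)^2) ^ ((1:ℂ)/2))).re ≥ -r₀ ∧
        ‖(s / ((ν * s + (c:ℂ)^2) ^ ((1:ℂ)/2)))^2 /
            (s / ((ν * s + (c:ℂ)^2) ^ ((1:ℂ)/2)) + 2)^2 *
            Complex.exp (-2 * (s / ((ν * s + (c:ℂ)^2) ^ ((1:ℂ)/2))))‖ ≤ r₀ := by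
  set M2 : ℝ := 25 * c ^ 2 / ν ^ 2 with hM2def
  have hM2 : 0 < M2 := by positivity
  set σ₀ : ℝ := min (c ^ 2 / (2 * ν)) (c / (2 * (6 + M2))) with hσdef
  have hσpos : 0 < σ₀ := lt_min (by positivity) (by positivity)
  refine ⟨σ₀, max (25/29) (M2/(M2+2)), hσpos, ⟨?_, ?_⟩, ?_⟩
  · exact lt_of_lt_of_le (by norm_num) (le_max_left _ _)
  · exact max_lt (by norm_num) (by rw [div_lt_one (by positivity)]; linarith)
  intro s hs _
  set δ : ℝ := 2 * σ₀ / c with hδdef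
  have hδ0 : 0 < δ := by positivity
  have hσ1 : σ₀ ≤ c ^ 2 / (2 * ν) := min_le_left _ _
  have hσ2 : σ₀ * (2 * (6 + M2)) ≤ c :=
    (le_div_iff₀ (by positivity)).mp (min_le_right _ _)
  have hδdef2 : δ * c = 2 * σ₀ := by rw [hδdef]; field_simp
  clear_value σ₀
  clear_value δ
  have hδM : δ * (6 + M2) ≤ 1 := auxDelta c σ₀ δ M2 hc hδdef2 hσ2 hM2 hσpos
  have hδ6 : δ ≤ 1/6 := auxDelta6 δ M2 hδ0 hM2 hδM
  -- z setup
  set z : ℂ := (ν:ℂ) * s + (c:ℂ)^2 with hzdef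
  have hsre : s.re ≥ -(c^2/(2*ν)) := by linarith [hσ1]
  have hzre : z.re = ν * s.re + c^2 := by
    rw [hzdef]
    simp [Complex.add_re, ← Complex.ofReal_pow, Complex.re_ofReal_mul]
  have hνs : ν * s.re ≥ -(c^2/2) := by
    have h1 : ν * s.re ≥ ν * (-(c^2/(2*ν))) := mul_le_mul_of_nonneg_left hsre hν.le
    have h2 : ν * (-(c^2/(2*ν))) = -(c^2/2) := by field_simp
    linarith
  have hzrepos : 0 < z.re := by rw [hzre]; nlinarith
  have hzrehalf : c^2/2 ≤ z.re := by rw [hzre]; linarith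
  have hz0 : z ≠ 0 := by
    intro h
    rw [h] at hzrepos
    simp at hzrepos
  clear_value z
  -- w setup
  set w : ℂ := z ^ ((1:ℂ)/2) with hwdef
  have hw2 : w * w = z := by
    rw [hwdef, ← Complex.cpow_add _ _ hz0]
    norm_num
  have hw0 : w ≠ 0 := fun h => hz0 (by rw [← hw2, h, mul_zero])
  set N : ℝ := ‖z‖ with hNdef
  have hN0 : 0 < N := norm_pos_iff.mpr hz0
  have habs : ‖w‖ ^ 2 = N := by
    rw [hNdef, sq, ← norm_mul, hw2]
  have hNc : c^2/2 ≤ N := le_trans hzrehalf (Complex.re_le_norm z)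
  -- real part of w
  have hwexp : w = Complex.exp (Complex.log z * ((1:ℂ)/2)) :=
    Complex.cpow_def_of_ne_zero hz0 _
  have him : (Complex.log z * ((1:ℂ)/2)).im = z.arg / 2 := by
    have : ((1:ℂ)/2) = ((1/2 : ℝ) : ℂ) := by norm_num
    rw [this, Complex.mul_im]
    simp [Complex.log_im]
    ring
  have hwre : w.re = ‖w‖ * Real.cos (z.arg / 2) := by
    rw [hwexp, Complex.exp_re, Complex.norm_exp, him]
  have harg : |z.arg| ≤ Real.pi / 2 := Complex.abs_arg_le_pi_div_two_iff.mpr hzrepos.le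
  have hcos : Real.sqrt 2 / 2 ≤ Real.cos (z.arg / 2) := by
    rw [← Real.cos_pi_div_four, ← Real.cos_abs (z.arg / 2)]
    apply Real.cos_le_cos_of_nonneg_of_le_pi (abs_nonneg _)
    · linarith [Real.pi_pos]
    · rw [abs_div, abs_of_pos (show (0:ℝ) < 2 by norm_num)]
      linarith [abs_nonneg z.arg]
  have hsqrt2 : Real.sqrt 2 ^ 2 = 2 := Real.sq_sqrt (by norm_num)
  have hsqrt2pos : 0 < Real.sqrt 2 := Real.sqrt_pos.mpr (by norm_num)
  have habsw : 0 < ‖w‖ := norm_pos_iff.mpr hw0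
  set R : ℝ := w.re with hRdef
  have hRlow : ‖w‖ * (Real.sqrt 2 / 2) ≤ R := by
    rw [hwre]
    exact mul_le_mul_of_nonneg_left hcos habsw.le
  have hRpos : 0 < R := lt_of_lt_of_le (by positivity) hRlow
  have h2R : N ≤ 2 * R^2 := by
    nlinarith [mul_self_le_mul_self (show (0:ℝ) ≤ ‖w‖ * (Real.sqrt 2/2) by positivity) hRlow, hsqrt2, habs]
  have hRN : R^2 ≤ N := by
    nlinarith [mul_self_le_mul_self hRpos.le (Complex.re_le_norm w), habs]
  have hRc : c/2 ≤ R := by nlinarith [h2R, hNc, hRpos.le, mul_pos hRpos hc]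
  clear_value w N R
  -- lambda
  set L : ℂ := s / w with hLdef
  have hsw : (ν:ℂ) * s = w * w - (c:ℂ)^2 := by rw [hw2, hzdef]; ring
  have hlam : (ν:ℂ) * L = w - (c:ℂ)^2 * w⁻¹ := by
    rw [hLdef]
    field_simp
    linear_combination hsw
  have hnsw : Complex.normSq w = N := by rw [Complex.normSq_eq_norm_sq, habs]
  set x : ℝ := L.re with hxdef
  have hxeq : ν * x = R - c^2 * (R / N) := by
    have h1 := congrArg Complex.re hlam
    rw [Complex.re_ofReal_mul, Complex.sub_re] at h1
    have h2 : ((c:ℂ)^2 * w⁻¹).re = c^2 * (w.re / N) := by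
      rw [show ((c:ℂ)^2) = ((c^2:ℝ):ℂ) by push_cast; ring, Complex.re_ofReal_mul,
        Complex.inv_re, hnsw]
    rw [h2, ← hRdef, ← hxdef] at h1
    exact h1
  have hxN : ν * x * N = R * (N - c^2) := by
    rw [hxeq]; field_simp
  have hsabs : ν * ‖s‖ ≤ N + c^2 := by
    have h1 : ‖(ν:ℂ) * s‖ = ν * ‖s‖ := by
      rw [norm_mul, Complex.norm_real, Real.norm_eq_abs, abs_of_pos hν]
    have h3 := norm_sub_le (w * w) ((c:ℂ)^2)
    rw [← hsw, h1] at h3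
    have h4 : ‖w * w‖ = N := by rw [norm_mul, ← sq, habs]
    have h5 : ‖(c:ℂ)^2‖ = c^2 := by
      rw [norm_pow, Complex.norm_real, Real.norm_eq_abs, abs_of_pos hc]
    rw [h4, h5] at h3
    exact h3
  set T2 : ℝ := Complex.normSq L with hT2def
  have hT2nn : 0 ≤ T2 := Complex.normSq_nonneg L
  have hT2N : T2 * N = ‖s‖ ^ 2 := by
    rw [hT2def, hLdef, map_div₀ Complex.normSq, hnsw, Complex.normSq_eq_norm_sq]
    field_simp
  have hT2key : ν^2 * (T2 * N) ≤ (N + c^2)^2 := by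
    rw [hT2N]
    exact auxSq ν ‖s‖ (N + c^2) (norm_nonneg s) hν.le hsabs
  -- lower bound on x
  have hNl : -(ν*σ₀) ≤ N - c^2 := by
    have h1 : ν * s.re ≥ ν * (-σ₀) := mul_le_mul_of_nonneg_left hs hν.le
    have h2 : z.re ≤ N := hNdef ▸ Complex.re_le_norm z
    rw [hzre] at h2
    have h3 : ν * (-σ₀) = -(ν*σ₀) := by ring
    linarith
  have hxδ : -δ ≤ x := auxXlow ν c σ₀ δ x N R hν hc hσpos hδdef2 hxN hN0 hRpos hRN hRc hNl
  -- norm identity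
  have hnq : Complex.normSq (L+2) = T2 + 4*x + 4 := by
    rw [hT2def, Complex.normSq_apply, Complex.normSq_apply]
    simp [Complex.add_re, Complex.add_im]
    ring
  have hre2 : ((-2:ℂ)*L).re = -(2*x) := by
    rw [hxdef]
    simp [Complex.mul_re]
  have hnormeq : ‖L^2/(L+2)^2 * Complex.exp (-2*L)‖
      = T2 * Real.exp (-(2*x)) / (T2 + 4*x + 4) := by
    rw [norm_mul, norm_div, norm_pow, norm_pow, Complex.norm_exp, hre2]
    rw [← Complex.normSq_eq_norm_sq, ← Complex.normSq_eq_norm_sq, hnq, ← hT2def]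
    ring
  constructor
  · have h1 : (25/29 : ℝ) ≤ max (25/29) (M2/(M2+2)) := le_max_left _ _
    have h2 : x ≥ -δ := hxδ
    simp only [ge_iff_le]
    linarith
  · rw [hnormeq]
    rcases le_or_gt N (2*c^2) with hNcase | hNcase
    · have hT2M : T2 ≤ M2 := by
        rw [hM2def]
        exact auxT2M ν c T2 N hν hc hNc hNcase hT2key hT2nn
      exact le_trans (auxA M2 T2 x δ hM2 hT2nn hT2M hδ0 hδM hxδ) (le_max_right _ _)
    · obtain ⟨hx0, hT2x⟩ := auxCaseB ν c T2 N R x hν hc hN0 hNcase hT2key hT2nn hxN hRpos h2R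
      exact le_trans (auxB T2 x hT2nn hx0 hT2x) (le_max_left _ _)
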